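/- Let ρ : ℝ → ℝ be a positive twice-differentiable function satisfying ρ(t)·ρ''(t) − 2·ρ'(t)² − ρ(t)² = 0 on an open interval I. Then there exist a ∈ ℝ, a ≠ 0, and t₀ ∈ ℝ such that ρ(t) = a / cos(t + t₀) for all t ∈ I. -/

import Mathlib

lemma const_of_deriv_zero' {f : ℝ → ℝ} {s : Set ℝ} (hs : Convex ℝ s) (ho : IsOpen s)
    (h : ∀ t ∈ s, HasDerivAt f 0 t) {a b : ℝ} (ha : a ∈ s) (hb : b ∈ s) : f a = f b := by
  apply hs.is_const_of_fderivWithin_eq_zero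
    (fun t ht => ((h t ht).differentiableAt).differentiableWithinAt) _ ha hb
  intro t ht
  rw [fderivWithin_of_isOpen ho ht, ((h t ht).hasFDerivAt).fderiv]
  ext
  simp

theorem stmt_6 (x y : ℝ) (ρ ρ' ρ'' : ℝ → ℝ)
    (hpos : ∀ t ∈ Set.Ioo x y, 0 < ρ t)
    (hd1 : ∀ t ∈ Set.Ioo x y, HasDerivAt ρ (ρ' t) t)
    (hd2 : ∀ t ∈ Set.Ioo x y, HasDerivAt ρ' (ρ'' t) t)
    (hode : ∀ t ∈ Set.Ioo x y, ρ t * ρ'' t - 2 * (ρ' t) ^ 2 - (ρ t) ^ 2 = 0) :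
    ∃ (a t₀ : ℝ), a ≠ 0 ∧ ∀ t ∈ Set.Ioo x y, ρ t = a / Real.cos (t + t₀) := by
  rcases Set.eq_empty_or_nonempty (Set.Ioo x y) with he | ⟨t₁, ht₁⟩
  · exact ⟨1, 0, one_ne_zero, fun t ht => absurd (he ▸ ht) (Set.notMem_empty t)⟩
  set s := Set.Ioo x y
  set u : ℝ → ℝ := fun t => (ρ t)⁻¹ with hu
  set u' : ℝ → ℝ := fun t => -ρ' t / ρ t ^ 2 with hu'
  have hne : ∀ t ∈ s, ρ t ≠ 0 := fun t ht => (hpos t ht).ne'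
  have hud : ∀ t ∈ s, HasDerivAt u (u' t) t := fun t ht => by
    exact (hd1 t ht).inv (hne t ht)
  have hud2 : ∀ t ∈ s, HasDerivAt u' (-(u t)) t := by
    intro t ht
    have h := ((hd2 t ht).neg).div ((hd1 t ht).pow 2) (pow_ne_zero 2 (hne t ht))
    refine h.congr_deriv ?_
    have h0 := hne t ht
    have ho := hode t ht
    simp only [Pi.pow_apply, Pi.neg_apply, Nat.cast_ofNat, Nat.reduceSub, pow_one, hu]
    field_simp [hu]
    nlinarith [ho]
  -- C and D are constant
  set C : ℝ → ℝ := fun t => u t * Real.cos t - u' t * Real.sin t with hC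
  set D : ℝ → ℝ := fun t => u t * Real.sin t + u' t * Real.cos t with hD
  have hCd : ∀ t ∈ s, HasDerivAt C 0 t := by
    intro t ht
    have h := ((hud t ht).mul (Real.hasDerivAt_cos t)).sub
      ((hud2 t ht).mul (Real.hasDerivAt_sin t))
    refine h.congr_deriv ?_; ring
  have hDd : ∀ t ∈ s, HasDerivAt D 0 t := by
    intro t ht
    have h := ((hud t ht).mul (Real.hasDerivAt_sin t)).add
      ((hud2 t ht).mul (Real.hasDerivAt_cos t))
    refine h.congr_deriv ?_; ring
  set c := C t₁ with hc
  set d := D t₁ with hd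
  have hform : ∀ t ∈ s, u t = c * Real.cos t + d * Real.sin t := by
    intro t ht
    have h1 : C t = c := const_of_deriv_zero' (convex_Ioo x y) isOpen_Ioo hCd ht ht₁
    have h2 : D t = d := const_of_deriv_zero' (convex_Ioo x y) isOpen_Ioo hDd ht ht₁
    have h3 := Real.sin_sq_add_cos_sq t
    rw [← h1, ← h2]
    show u t = (u t * Real.cos t - u' t * Real.sin t) * Real.cos t +
      (u t * Real.sin t + u' t * Real.cos t) * Real.sin t
    have h4 : (u t * Real.cos t - u' t * Real.sin t) * Real.cos t +
      (u t * Real.sin t + u' t * Real.cos t) * Real.sin t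
      = u t * (Real.sin t ^ 2 + Real.cos t ^ 2) := by ring
    rw [h4, h3, mul_one]
  have hu1 : 0 < u t₁ := inv_pos.mpr (hpos t₁ ht₁)
  have hcd : c ^ 2 + d ^ 2 ≠ 0 := by
    intro h
    have hc0 : c = 0 := by nlinarith
    have hd0 : d = 0 := by nlinarith
    have := hform t₁ ht₁
    rw [hc0, hd0] at this
    simp at this
    linarith [this ▸ hu1]
  set r := Real.sqrt (c ^ 2 + d ^ 2) with hr
  have hrpos : 0 < r := Real.sqrt_pos.mpr (lt_of_le_of_ne (by positivity) (Ne.symm hcd))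
  have hr2 : r ^ 2 = c ^ 2 + d ^ 2 := Real.sq_sqrt (by positivity)
  -- find t₀ with cos t₀ = c/r, sin t₀ = -d/r
  set z : ℂ := ⟨c / r, -d / r⟩ with hz
  have hzabs : ‖z‖ = 1 := by
    rw [Complex.norm_def, Complex.normSq_apply]
    show Real.sqrt (c / r * (c / r) + -d / r * (-d / r)) = 1
    rw [show c / r * (c / r) + -d / r * (-d / r) = (c ^ 2 + d ^ 2) / r ^ 2 by ring, ← hr2]
    rw [div_self (by positivity)]
    exact Real.sqrt_one
  have hz0 : z ≠ 0 := by
    intro h; rw [h] at hzabs; simp at hzabs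
  refine ⟨r⁻¹, z.arg, by positivity, fun t ht => ?_⟩
  have hcos : Real.cos z.arg = c / r := by rw [Complex.cos_arg hz0, hzabs]; simp [hz]
  have hsin : Real.sin z.arg = -d / r := by rw [Complex.sin_arg, hzabs]; simp [hz]
  have hut : u t = r * Real.cos (t + z.arg) := by
    rw [Real.cos_add, hcos, hsin, hform t ht]
    field_simp
    ring
  have hupos : 0 < u t := inv_pos.mpr (hpos t ht)
  have hρ : ρ t = (u t)⁻¹ := by rw [hu]; simp
  rw [hρ, hut]
  rw [mul_inv, div_eq_mul_inv]
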